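/- arXiv:1204.1147 — 6 statements merged into one kernel-verified Lean document; each statement's English description precedes it below -/
import Mathlib

section
/- Let f : ℝⁿ → ℝⁿ be a monotone partial function whose domain is upward closed, let x ∈ dom(f) with f(x) = x, and let k ∈ ℕ. Assume that for every ε > 0 there exists a unit vector d_ε ≫ 0 (with respect to the maximum norm) such that fᵏ(x + λ·d_ε) ≪ x + λ·d_ε for all λ ≥ ε. Then every y with y ≤ f(y) satisfies y ≤ x, i.e., x is the greatest pre-fixpoint of f. -/
/-- Sufficient criterion for a fixpoint of a monotone partial
operator on ℝⁿ (modeled by a total function `f` together with its domain `D`)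
to be the greatest pre-fixpoint.  The norm `‖·‖` on `Fin n → ℝ` is the
maximum norm. -/
theorem greatest_prefixpoint_of_directions {n : ℕ}
    (f : (Fin n → ℝ) → (Fin n → ℝ)) (D : Set (Fin n → ℝ))
    (hDup : ∀ a ∈ D, ∀ b, a ≤ b → b ∈ D)
    (hDclosed : ∀ a ∈ D, f a ∈ D)
    (hmono : ∀ a ∈ D, ∀ b ∈ D, a ≤ b → f a ≤ f b)
    (x : Fin n → ℝ) (hx : x ∈ D) (hfix : f x = x) (k : ℕ)
    (hdir : ∀ ε : ℝ, 0 < ε → ∃ d : Fin n → ℝ, ‖d‖ = 1 ∧ (∀ i, 0 < d i) ∧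
      ∀ lam : ℝ, ε ≤ lam →
        x + lam • d ∈ D ∧ ∀ i, (f^[k] (x + lam • d)) i < (x + lam • d) i) :
    ∀ y ∈ D, y ≤ f y → y ≤ x := by
  intro y hy hpre
  by_contra hyx
  rw [Pi.le_def] at hyx
  push_neg at hyx
  obtain ⟨i, hi⟩ := hyx
  have hεpos : 0 < y i - x i := sub_pos.mpr hi
  obtain ⟨d, hdnorm, hdpos, hlam⟩ := hdir (y i - x i) hεpos
  have hdle1 : ∀ j, d j ≤ 1 := by
    intro j
    have h : ‖d j‖ ≤ 1 := hdnorm ▸ norm_le_pi_norm d j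
    calc d j ≤ |d j| := le_abs_self _
    _ ≤ 1 := by simpa using h
  obtain ⟨i0, -, hmax⟩ := Finset.exists_max_image Finset.univ
    (fun j => (y j - x j) / d j) ⟨i, Finset.mem_univ i⟩
  set lam := (y i0 - x i0) / d i0 with hlamdef
  have hlamge : y i - x i ≤ lam := by
    have h1 : y i - x i ≤ (y i - x i) / d i := by
      rw [le_div_iff₀ (hdpos i)]
      nlinarith [hdle1 i, hdpos i]
    exact h1.trans (hmax i (Finset.mem_univ i))
  obtain ⟨hzD, hzlt⟩ := hlam lam hlamge
  set z := x + lam • d with hz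
  have hyz : y ≤ z := by
    intro j
    have h := hmax j (Finset.mem_univ j)
    have h2 : y j - x j ≤ lam * d j := by
      rwa [div_le_iff₀ (hdpos j)] at h
    simp only [hz, Pi.add_apply, Pi.smul_apply, smul_eq_mul]
    linarith
  have hzi0 : z i0 = y i0 := by
    have h : lam * d i0 = y i0 - x i0 :=
      div_mul_cancel₀ _ (ne_of_gt (hdpos i0))
    simp only [hz, Pi.add_apply, Pi.smul_apply, smul_eq_mul]
    linarith
  have hmem_ley : ∀ m, f^[m] y ∈ D ∧ y ≤ f^[m] y := by
    intro m; induction m with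
    | zero => simpa using hy
    | succ m ih =>
      obtain ⟨hmem, hle⟩ := ih
      rw [Function.iterate_succ_apply']
      refine ⟨hDclosed _ hmem, ?_⟩
      calc y ≤ f y := hpre
      _ ≤ f (f^[m] y) := hmono y hy _ hmem hle
  have hit : ∀ m, f^[m] z ∈ D ∧ f^[m] y ≤ f^[m] z := by
    intro m; induction m with
    | zero => simpa using ⟨hzD, hyz⟩
    | succ m ih =>
      obtain ⟨hmem, hle⟩ := ih
      rw [Function.iterate_succ_apply', Function.iterate_succ_apply']
      exact ⟨hDclosed _ hmem, hmono _ (hmem_ley m).1 _ hmem hle⟩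
  have h1 : y i0 ≤ f^[k] y i0 := (hmem_ley k).2 i0
  have h2 : f^[k] y i0 ≤ f^[k] z i0 := (hit k).2 i0
  have h3 : f^[k] z i0 < z i0 := hzlt i0
  linarith [hzi0 ▸ h3]
end

section
/- Let f : ℝⁿ → ℝⁿ be a monotone partial function with upward closed domain, x ∈ dom(f) a fixpoint of f, and k ∈ ℕ. Suppose there exists a single unit vector d ≫ 0 such that fᵏ(x + λ·d) ≪ x + λ·d for all λ > 0. Then x is the greatest pre-fixpoint of f, i.e., y ≤ f(y) implies y ≤ x. -/
/-- Sufficient criterion for a fixpoint of a monotone partial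
operator on ℝⁿ (modeled by a total function `f` together with its domain `D`)
to be the greatest pre-fixpoint, with a single direction `d ≫ 0`.
The norm `‖·‖` on `Fin n → ℝ` is the maximum norm. -/
theorem greatest_prefixpoint_of_single_direction {n : ℕ}
    (f : (Fin n → ℝ) → (Fin n → ℝ)) (D : Set (Fin n → ℝ))
    (hDup : ∀ a ∈ D, ∀ b, a ≤ b → b ∈ D)
    (hDclosed : ∀ a ∈ D, f a ∈ D)
    (hmono : ∀ a ∈ D, ∀ b ∈ D, a ≤ b → f a ≤ f b)
    (x : Fin n → ℝ) (hx : x ∈ D) (hfix : f x = x) (k : ℕ)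
    (d : Fin n → ℝ) (hnorm : ‖d‖ = 1) (hdpos : ∀ i, 0 < d i)
    (hdir : ∀ lam : ℝ, 0 < lam →
      x + lam • d ∈ D ∧ ∀ i, (f^[k] (x + lam • d)) i < (x + lam • d) i) :
    ∀ y ∈ D, y ≤ f y → y ≤ x := by
  intro y hy hle
  rcases Nat.eq_zero_or_pos n with hn | hn
  · subst hn; intro i; exact i.elim0
  haveI : Nonempty (Fin n) := ⟨⟨0, hn⟩⟩
  -- iterates stay in D
  have hiter_mem : ∀ m, ∀ a ∈ D, f^[m] a ∈ D := by
    intro m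
    induction m with
    | zero => intro a ha; simpa using ha
    | succ m ih =>
      intro a ha
      rw [Function.iterate_succ_apply]
      exact ih _ (hDclosed a ha)
  -- iterates are monotone
  have hiter_mono : ∀ m, ∀ a ∈ D, ∀ b ∈ D, a ≤ b → f^[m] a ≤ f^[m] b := by
    intro m
    induction m with
    | zero => intro a _ b _ h; simpa using h
    | succ m ih =>
      intro a ha b hb h
      rw [Function.iterate_succ_apply, Function.iterate_succ_apply]
      exact ih _ (hDclosed a ha) _ (hDclosed b hb) (hmono a ha b hb h)
  have hyiter : ∀ m, y ≤ f^[m] y := by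
    intro m
    induction m with
    | zero => simp
    | succ m ih =>
      calc y ≤ f^[m] y := ih
        _ ≤ f^[m] (f y) := hiter_mono m y hy (f y) (hDclosed y hy) hle
        _ = f^[m+1] y := (Function.iterate_succ_apply f m y).symm
  set S : Set ℝ := {l : ℝ | 0 ≤ l ∧ ∀ i, y i ≤ x i + l * d i} with hS
  have hmemS : ∀ l : ℝ, 0 ≤ l → (∀ i, (y i - x i) / d i ≤ l) → l ∈ S := by
    intro l hl0 hl
    refine ⟨hl0, fun i => ?_⟩
    have := (div_le_iff₀ (hdpos i)).1 (hl i)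
    linarith
  have hlb : ∀ i, ∀ l ∈ S, (y i - x i) / d i ≤ l := by
    intro i l hl
    have := hl.2 i
    exact (div_le_iff₀ (hdpos i)).2 (by linarith)
  -- S is nonempty
  set M : ℝ := Finset.univ.sup' Finset.univ_nonempty (fun i => (y i - x i) / d i) with hM
  have hMle : ∀ i, (y i - x i) / d i ≤ M := fun i =>
    Finset.le_sup' (fun i => (y i - x i) / d i) (Finset.mem_univ i)
  have hne : S.Nonempty :=
    ⟨max M 0, hmemS _ (le_max_right _ _) fun i => (hMle i).trans (le_max_left _ _)⟩
  have hbdd : BddBelow S := ⟨0, fun l hl => hl.1⟩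
  set c : ℝ := sInf S with hc
  have hc0 : 0 ≤ c := le_csInf hne fun l hl => hl.1
  have hyc : ∀ i, y i ≤ x i + c * d i := by
    intro i
    have : (y i - x i) / d i ≤ c := le_csInf hne (hlb i)
    have := (div_le_iff₀ (hdpos i)).1 this
    linarith
  -- show c ≤ 0
  have hcle : c ≤ 0 := by
    by_contra hpos
    push_neg at hpos
    obtain ⟨hmem, hstrict⟩ := hdir c hpos
    have hyle : y ≤ x + c • d := by
      intro i
      simpa [smul_eq_mul] using hyc i
    have hstr : ∀ i, y i < x i + c * d i := by
      intro i
      have h1 : y i ≤ (f^[k] y) i := hyiter k i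
      have h2 : (f^[k] y) i ≤ (f^[k] (x + c • d)) i :=
        hiter_mono k y hy (x + c • d) hmem hyle i
      have h3 := hstrict i
      simp only [Pi.add_apply, Pi.smul_apply, smul_eq_mul] at h3
      linarith
    have hMlt : M < c := by
      rw [hM]
      apply (Finset.sup'_lt_iff Finset.univ_nonempty).2
      intro i _
      exact (div_lt_iff₀ (hdpos i)).2 (by linarith [hstr i])
    have : c ≤ max M 0 := csInf_le hbdd
      (hmemS _ (le_max_right _ _) fun i => (hMle i).trans (le_max_left _ _))
    have := max_lt hMlt hpos
    linarith
  have hceq : c = 0 := le_antisymm hcle hc0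
  intro i
  have := hyc i
  rw [hceq] at this
  linarith
end

section
/- Let f : ℝⁿ ⇀ ℝⁿ be an order-convex partial function, and let x, x* ∈ dom(f) with f(x*) = x*, x ≫ f(x), and d := x* − x ≫ 0. Then for every λ > 0 with x* + λd ∈ dom(f), it holds that x* + λd ≪ f(x* + λd). -/
/-- A set of vectors is order-convex. -/
def OrderConvexSet {k : ℕ} (S : Set (Fin k → ℝ)) : Prop :=
  ∀ x ∈ S, ∀ y ∈ S, (x ≤ y ∨ y ≤ x) → ∀ t : ℝ, 0 ≤ t → t ≤ 1 →
    t • x + (1 - t) • y ∈ S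

/-- Order-convex partial function with domain `D`. -/
def OrderConvexFnOn {n : ℕ} (f : (Fin n → ℝ) → Fin n → ℝ) (D : Set (Fin n → ℝ)) : Prop :=
  OrderConvexSet D ∧
  ∀ x ∈ D, ∀ y ∈ D, (x ≤ y ∨ y ≤ x) → ∀ t : ℝ, 0 ≤ t → t ≤ 1 →
    f (t • x + (1 - t) • y) ≤ t • f x + (1 - t) • f y

/-- If `f` is order-convex, `x* ∈ D` a fixpoint, `x ∈ D` with
`x ≫ f x` and `d := x* − x ≫ 0`, then `x* + λ·d ≪ f(x* + λ·d)` for all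
`λ > 0` with `x* + λ·d ∈ D`. -/
theorem orderConvex_strict_above_fixpoint {n : ℕ}
    (f : (Fin n → ℝ) → Fin n → ℝ) (D : Set (Fin n → ℝ))
    (hf : OrderConvexFnOn f D)
    (x xs : Fin n → ℝ) (hx : x ∈ D) (hxs : xs ∈ D)
    (hfix : f xs = xs) (hlt : ∀ i, f x i < x i) (hd : ∀ i, 0 < (xs - x) i) :
    ∀ lam : ℝ, 0 < lam → xs + lam • (xs - x) ∈ D →
      ∀ i, (xs + lam • (xs - x)) i < f (xs + lam • (xs - x)) i := by
  intro lam hlam hy i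
  set y : Fin n → ℝ := xs + lam • (xs - x) with hydef
  have ht0 : (0:ℝ) < 1 + lam := by linarith
  set t : ℝ := 1 / (1 + lam) with htdef
  have ht1 : 0 < t := by positivity
  have htlt : t < 1 := by
    rw [htdef, div_lt_one ht0]; linarith
  have htmul : t * (1 + lam) = 1 := by
    rw [htdef]; field_simp
  have hxy : x ≤ y := by
    intro j
    have hj := hd j
    simp only [hydef, Pi.add_apply, Pi.smul_apply, Pi.sub_apply, smul_eq_mul] at *
    nlinarith
  have hcomb : t • y + (1 - t) • x = xs := by
    funext j
    simp only [hydef, Pi.add_apply, Pi.smul_apply, Pi.sub_apply, smul_eq_mul]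
    have hs : t * lam = 1 - t := by linear_combination htmul
    linear_combination (xs j - x j) * hs
  have hconv := hf.2 y hy x hx (Or.inr hxy) t (le_of_lt ht1) (le_of_lt htlt)
  rw [hcomb, hfix] at hconv
  have h1 : xs i ≤ t * f y i + (1 - t) * f x i := by
    have := hconv i
    simpa using this
  have h2 := hlt i
  have hdi := hd i
  simp only [Pi.sub_apply] at hdi
  have hyi : y i = xs i + lam * (xs i - x i) := by
    simp [hydef]
  show y i < f y i
  rw [hyi]
  have hs : t * lam = 1 - t := by linear_combination htmul
  nlinarith [mul_pos ht1 hlam, hs]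
end

section
/- Let f : ℝⁿ ⇀ ℝⁿ be an order-concave partial function, and let x, x* ∈ dom(f) with f(x*) = x*, x ≪ f(x), and d := x* − x ≫ 0. Then for every λ > 0 with x* + λd ∈ dom(f), it holds that x* + λd ≫ f(x* + λd). -/
/-- Order-concave partial function with domain `D`. -/
def OrderConcaveFnOn {n : ℕ} (f : (Fin n → ℝ) → Fin n → ℝ) (D : Set (Fin n → ℝ)) : Prop :=
  OrderConvexSet D ∧
  ∀ x ∈ D, ∀ y ∈ D, (x ≤ y ∨ y ≤ x) → ∀ t : ℝ, 0 ≤ t → t ≤ 1 →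
    t • f x + (1 - t) • f y ≤ f (t • x + (1 - t) • y)

/-- If `f` is order-concave, `x* ∈ D` a fixpoint, `x ∈ D` with
`x ≪ f x` and `d := x* − x ≫ 0`, then `x* + λ·d ≫ f(x* + λ·d)` for all
`λ > 0` with `x* + λ·d ∈ D`. -/
theorem orderConcave_strict_above_fixpoint {n : ℕ}
    (f : (Fin n → ℝ) → Fin n → ℝ) (D : Set (Fin n → ℝ))
    (hf : OrderConcaveFnOn f D)
    (x xs : Fin n → ℝ) (hx : x ∈ D) (hxs : xs ∈ D)
    (hfix : f xs = xs) (hlt : ∀ i, x i < f x i) (hd : ∀ i, 0 < (xs - x) i) :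
    ∀ lam : ℝ, 0 < lam → xs + lam • (xs - x) ∈ D →
      ∀ i, f (xs + lam • (xs - x)) i < (xs + lam • (xs - x)) i := by
  intro lam hlam hmem i
  set y : Fin n → ℝ := xs + lam • (xs - x) with hy
  have h1 : (0:ℝ) < 1 + lam := by linarith
  set t : ℝ := 1 / (1 + lam) with htdef
  have ht0 : 0 < t := by positivity
  have ht1 : t ≤ 1 := by rw [htdef, div_le_one h1]; linarith
  have hxy : x ≤ y := by
    intro j
    have hdj := hd j
    simp only [hy, Pi.add_apply, Pi.smul_apply, Pi.sub_apply, smul_eq_mul] at *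
    nlinarith
  have hkey : t • y + (1 - t) • x = xs := by
    funext j
    simp only [hy, htdef, Pi.add_apply, Pi.smul_apply, Pi.sub_apply, smul_eq_mul]
    field_simp
    ring
  have hcc := hf.2 y hmem x hx (Or.inr hxy) t ht0.le ht1
  rw [hkey, hfix] at hcc
  have hi := hcc i
  simp only [Pi.add_apply, Pi.smul_apply, smul_eq_mul] at hi
  have h2 : t * y i + (1 - t) * x i = xs i := by
    have := congrFun hkey i
    simpa [Pi.add_apply, Pi.smul_apply, smul_eq_mul] using this
  have hx_lt := hlt i
  have ht1' : t < 1 := by rw [htdef, div_lt_one h1]; linarith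
  nlinarith
end

section
/- Let f : ℝⁿ ⇀ ℝⁿ be monotone and order-concave with upward closed domain. Let x* be a fixpoint of f, and suppose there exists a pre-fixpoint x of f with x ≪ x* such that the least fixpoint of f that is ≥ x equals x*. Then x* is the greatest pre-fixpoint of f: every y ∈ dom(f) with y ≤ f(y) satisfies y ≤ x*. -/
/-- Let `f` be monotone and order-concave with upward closed
domain `D`, `x*` a fixpoint, `x` a pre-fixpoint with `x ≪ x*` such that the
least fixpoint of `f` above `x` is `x*`.  Then `x*` is the greatest
pre-fixpoint of `f`. -/
theorem feasible_fixpoint_is_greatest_prefixpoint {n : ℕ}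
    (f : (Fin n → ℝ) → Fin n → ℝ) (D : Set (Fin n → ℝ))
    (hDup : ∀ a ∈ D, ∀ b, a ≤ b → b ∈ D)
    (hmono : ∀ a ∈ D, ∀ b ∈ D, a ≤ b → f a ≤ f b)
    (hconc : OrderConcaveFnOn f D)
    (xs x : Fin n → ℝ) (hxs : xs ∈ D) (hx : x ∈ D)
    (hfix : f xs = xs) (hpre : x ≤ f x) (hll : ∀ i, x i < xs i)
    (hleast : ∀ z ∈ D, f z = z → x ≤ z → xs ≤ z) :
    ∀ y ∈ D, y ≤ f y → y ≤ xs := by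
  intro y hy hyf
  -- z = y ⊔ xs is a pre-fixpoint above xs
  set z : Fin n → ℝ := fun i => max (y i) (xs i) with hzdef
  have hxsz : xs ≤ z := fun i => le_max_right _ _
  have hyz : y ≤ z := fun i => le_max_left _ _
  have hzD : z ∈ D := hDup xs hxs z hxsz
  have hfyz : f y ≤ f z := hmono y hy z hzD hyz
  have hfxsz : f xs ≤ f z := hmono xs hxs z hzD hxsz
  have hfz : z ≤ f z := by
    intro i
    refine max_le ((hyf i).trans (hfyz i)) ?_
    have := hfxsz i
    rw [hfix] at this
    exact this
  suffices h : z ≤ xs by intro i; exact (hyz i).trans (h i)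
  by_contra hcon
  have hcon' : ∃ i, xs i < z i := by
    by_contra hc
    push_neg at hc
    exact hcon fun i => not_lt.mp fun h => absurd (hc i) (not_le.mpr h)
  clear hcon
  obtain ⟨i₀, hi₀⟩ := hcon'
  have hne : (Finset.univ : Finset (Fin n)).Nonempty := ⟨i₀, Finset.mem_univ _⟩
  -- choose small δ > 0
  set δ : ℝ := Finset.univ.inf' hne (fun i => (xs i - x i) / (1 + z i - xs i)) with hδdef
  have hδpos : 0 < δ := by
    rw [hδdef, Finset.lt_inf'_iff]
    intro i _
    have h1 : 0 < xs i - x i := sub_pos.mpr (hll i)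
    have h2 : 0 < 1 + z i - xs i := by have := hxsz i; linarith
    positivity
  have hδle : ∀ i, δ * (z i - xs i) ≤ xs i - x i := by
    intro i
    have h2 : 0 < 1 + z i - xs i := by have := hxsz i; linarith
    have h3 : δ ≤ (xs i - x i) / (1 + z i - xs i) :=
      Finset.inf'_le _ (Finset.mem_univ i)
    have h4 : δ * (1 + z i - xs i) ≤ xs i - x i := by
      rw [← le_div_iff₀ h2]; exact h3
    nlinarith [hδpos]
  -- the point u = xs - δ(z - xs)
  set u : Fin n → ℝ := fun i => xs i - δ * (z i - xs i) with hudef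
  have hxu : x ≤ u := by
    intro i
    have := hδle i
    show x i ≤ xs i - δ * (z i - xs i)
    linarith
  have huxs : u ≤ xs := by
    intro i
    have h0 : 0 ≤ z i - xs i := by have := hxsz i; linarith
    have := mul_nonneg hδpos.le h0
    show xs i - δ * (z i - xs i) ≤ xs i
    linarith
  have huz : u ≤ z := fun i => (huxs i).trans (hxsz i)
  have huD : u ∈ D := hDup x hx u hxu
  have hs : (0:ℝ) < 1 + δ := by linarith
  have ht0 : (0:ℝ) ≤ 1 / (1 + δ) := by positivity
  have ht1 : 1 / (1 + δ) ≤ (1:ℝ) := by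
    rw [div_le_one hs]; linarith
  have hkey : (1 / (1 + δ)) • u + (1 - 1 / (1 + δ)) • z = xs := by
    funext i
    simp only [Pi.add_apply, Pi.smul_apply, smul_eq_mul]
    show (1 / (1 + δ)) * (xs i - δ * (z i - xs i)) + (1 - 1 / (1 + δ)) * z i = xs i
    field_simp
    ring
  have hcon2 := hconc.2 u huD z hzD (Or.inl huz) (1 / (1 + δ)) ht0 ht1
  rw [hkey, hfix] at hcon2
  -- f u ≤ u
  have hfu : f u ≤ u := by
    intro i
    have h1 : (1 / (1 + δ)) * f u i + (1 - 1 / (1 + δ)) * f z i ≤ xs i := hcon2 i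
    have h2 : z i ≤ f z i := hfz i
    have h1mt : 1 - 1 / (1 + δ) = δ / (1 + δ) := by field_simp; ring
    have hnn : (0:ℝ) ≤ 1 - 1 / (1 + δ) := by rw [h1mt]; positivity
    have h3 : (1 / (1 + δ)) * f u i + (1 - 1 / (1 + δ)) * z i ≤ xs i := by
      nlinarith [mul_le_mul_of_nonneg_left h2 hnn]
    have h4 : f u i + δ * z i ≤ (1 + δ) * xs i := by
      have h5 := mul_le_mul_of_nonneg_left h3 hs.le
      have e1 : (1 + δ) * ((1 / (1 + δ)) * f u i + (1 - 1 / (1 + δ)) * z i)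
          = f u i + δ * z i := by
        field_simp
        ring
      linarith [e1 ▸ h5]
    show f u i ≤ xs i - δ * (z i - xs i)
    linarith
  -- Knaster–Tarski in [x, u]
  set S : Set (Fin n → ℝ) := {w | x ≤ w ∧ w ≤ u ∧ f w ≤ w} with hSdef
  have huS : u ∈ S := ⟨hxu, le_refl _, hfu⟩
  set p : Fin n → ℝ := fun i => sInf ((fun w => w i) '' S) with hpdef
  have hbdd : ∀ i, BddBelow ((fun w : Fin n → ℝ => w i) '' S) := by
    intro i
    exact ⟨x i, by rintro r ⟨w, hw, rfl⟩; exact hw.1 i⟩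
  have hnonempty : ∀ i, ((fun w : Fin n → ℝ => w i) '' S).Nonempty :=
    fun i => ⟨u i, u, huS, rfl⟩
  have hps : ∀ w ∈ S, p ≤ w := by
    intro w hw i
    exact csInf_le (hbdd i) ⟨w, hw, rfl⟩
  have hxp : x ≤ p := by
    intro i
    refine le_csInf (hnonempty i) ?_
    rintro r ⟨w, hw, rfl⟩; exact hw.1 i
  have hpu : p ≤ u := hps u huS
  have hpD : p ∈ D := hDup x hx p hxp
  have hfpS : ∀ w ∈ S, f p ≤ w := by
    intro w hw
    have hwD : w ∈ D := hDup x hx w hw.1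
    exact (hmono p hpD w hwD (hps w hw)).trans hw.2.2
  have hfpp : f p ≤ p := by
    intro i
    refine le_csInf (hnonempty i) ?_
    rintro r ⟨w, hw, rfl⟩; exact hfpS w hw i
  have hfpD : f p ∈ D := hDup x hx (f p) ((hpre.trans (hmono x hx p hpD hxp)))
  have hfpmem : f p ∈ S :=
    ⟨hpre.trans (hmono x hx p hpD hxp), hfpp.trans hpu,
      hmono (f p) hfpD p hpD hfpp⟩
  have hpfix : f p = p := le_antisymm hfpp (hps (f p) hfpmem)
  have hxsp := hleast p hpD hpfix hxp
  have h5 : xs i₀ ≤ xs i₀ - δ * (z i₀ - xs i₀) := (hxsp i₀).trans (hpu i₀)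
  have h6 : 0 < δ * (z i₀ - xs i₀) := mul_pos hδpos (by linarith)
  linarith
end

section
/- Let f : (X → ℝ̄) → (X → ℝ̄) be upward-chain-continuous and monotone on the set of variable assignments ≥ ρ, where ρ : X → ℝ is a pre-fixpoint of f (ρ ≤ f(ρ)) and all Kleene iterates fᵏ(ρ) stay real-valued. Then the least fixpoint of f above ρ equals the supremum of the Kleene iteration: μ_{≥ρ} f = ⋁_{k∈ℕ} fᵏ(ρ), and consequently for each variable x, (μ_{≥ρ} f)(x) ≤ sup{ρ̂(x) | ρ̂ : X → ℝ, ρ̂ ≤ f(ρ̂)}. -/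
/-- Coercion of a real-valued variable assignment to an extended-real one. -/
noncomputable def coer {X : Type*} (ρ : X → ℝ) : X → EReal := fun x => (ρ x : EReal)

/-- For `f` monotone and upward-chain-continuous on the
assignments `≥ ρ`, where `ρ` is a real-valued pre-fixpoint whose Kleene
iterates stay real-valued, the least fixpoint `μ` of `f` above `ρ` equals the
supremum of the Kleene iteration, and hence each of its components is bounded
by the supremum over all real-valued pre-fixpoints. -/
theorem kleene_least_fixpoint {X : Type*} [Fintype X]
    (f : (X → EReal) → (X → EReal)) (ρ : X → ℝ)
    (hmono : ∀ a b : X → EReal, coer ρ ≤ a → coer ρ ≤ b → a ≤ b → f a ≤ f b)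
    (hcont : ∀ C : Set (X → EReal), C.Nonempty → IsChain (· ≤ ·) C →
      (∀ c ∈ C, coer ρ ≤ c) → f (sSup C) = sSup (f '' C))
    (hpre : coer ρ ≤ f (coer ρ))
    (hreal : ∀ k : ℕ, ∃ r : X → ℝ, f^[k] (coer ρ) = coer r)
    (μ : X → EReal) (hμfix : f μ = μ) (hμge : coer ρ ≤ μ)
    (hμleast : ∀ τ : X → EReal, coer ρ ≤ τ → f τ = τ → μ ≤ τ) :
    μ = ⨆ k : ℕ, f^[k] (coer ρ) ∧
    ∀ x : X, μ x ≤ sSup {v : EReal |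
      ∃ σ : X → ℝ, coer σ ≤ f (coer σ) ∧ v = ((σ x : ℝ) : EReal)} := by
  set g : ℕ → (X → EReal) := fun k => f^[k] (coer ρ) with hg
  have hsucc : ∀ k, g (k + 1) = f (g k) := by
    intro k; simp [hg, Function.iterate_succ_apply']
  have key : ∀ k, coer ρ ≤ g k ∧ g k ≤ g (k + 1) := by
    intro k
    induction k with
    | zero => exact ⟨le_refl _, hpre⟩
    | succ n ih =>
      have h1 : coer ρ ≤ g (n + 1) := ih.1.trans ih.2
      refine ⟨h1, ?_⟩
      rw [hsucc, hsucc]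
      exact hmono _ _ ih.1 h1 ih.2
  have hge : ∀ k, coer ρ ≤ g k := fun k => (key k).1
  have hmonog : Monotone g := monotone_nat_of_le_succ (fun k => (key k).2)
  have hchain : IsChain (· ≤ ·) (Set.range g) := by
    rintro _ ⟨i, rfl⟩ _ ⟨j, rfl⟩ _
    rcases le_total i j with h | h
    · exact Or.inl (hmonog h)
    · exact Or.inr (hmonog h)
  have hS : f (⨆ k, g k) = ⨆ k, g k := by
    have h1 : f (sSup (Set.range g)) = sSup (f '' Set.range g) :=
      hcont _ ⟨g 0, ⟨0, rfl⟩⟩ hchain (by rintro _ ⟨i, rfl⟩; exact hge i)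
    have h2 : f '' Set.range g = Set.range (fun k => g (k + 1)) := by
      ext y; constructor
      · rintro ⟨_, ⟨i, rfl⟩, rfl⟩; exact ⟨i, hsucc i⟩
      · rintro ⟨i, rfl⟩; exact ⟨g i, ⟨i, rfl⟩, (hsucc i).symm⟩
    rw [sSup_range] at h1
    rw [h1, h2, sSup_range]
    apply le_antisymm
    · exact iSup_le fun k => le_iSup g (k + 1)
    · exact iSup_le fun k => (key k).2.trans (le_iSup (fun k => g (k + 1)) k)
  have hμle : μ ≤ ⨆ k, g k :=
    hμleast _ (le_trans (hge 0) (le_iSup g 0)) hS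
  have hleμ : ∀ k, g k ≤ μ := by
    intro k
    induction k with
    | zero => exact hμge
    | succ n ih =>
      rw [hsucc]
      calc f (g n) ≤ f μ := hmono _ _ (hge n) hμge ih
        _ = μ := hμfix
  have heq : μ = ⨆ k, g k := le_antisymm hμle (iSup_le hleμ)
  refine ⟨heq, fun x => ?_⟩
  rw [heq]
  have : (⨆ k, g k) x = ⨆ k, g k x := by
    rw [iSup_apply]
  rw [this]
  apply iSup_le
  intro k
  obtain ⟨r, hr⟩ := hreal k
  have hrpre : coer r ≤ f (coer r) := by
    rw [← hr]
    have := (key k).2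
    rwa [hsucc] at this
  apply le_sSup
  refine ⟨r, hrpre, ?_⟩
  have : g k x = coer r x := by rw [← hr]
  simpa [coer] using this
end
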